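/- For any decision rule system S: (a) if C ∈ {EAR, AR}, then h_C(S) ≥ β(S); (b) if C ∈ {AD, SR}, then h_{EC}(S) ≥ β(I_C(S)); (c) if C ∈ {AD, SR} and S is incomplete, then h_C(S) ≥ β(S), where β denotes the minimum cardinality of a node cover of the associated hypergraph. -/

import Mathlib

open scoped Classical
noncomputable section

/-- Attributes are natural numbers. -/
abbrev Attr := ℕ
/-- A value in an equation system: `some δ` is a number, `none` is the special symbol `*`. -/
abbrev Val := Option ℕ
/-- A decision rule: left-hand side (set of equations attribute = numeric value) and
right-hand side (decision). -/
abbrev Rule := Finset (Attr × ℕ) × ℕ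
/-- An equation system over attributes with possibly `*` values. -/
abbrev EqSys := Finset (Attr × Val)
/-- A decision rule system. -/
abbrev DRS := Finset Rule

/-- The equation system `K(r)` of a rule. -/
def Kr (r : Rule) : EqSys := r.1.image fun p => (p.1, some p.2)
/-- The set `A(r)` of attributes of a rule. -/
def Ar (r : Rule) : Finset Attr := r.1.image Prod.fst
/-- The length of a rule. -/
def ruleLen (r : Rule) : ℕ := r.1.card
/-- Well-formed rule: attributes in the left-hand side are pairwise different. -/
def WFRule (r : Rule) : Prop := ∀ p ∈ r.1, ∀ q ∈ r.1, p.1 = q.1 → p.2 = q.2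
/-- Well-formed decision rule system: a finite nonempty set of well-formed rules. -/
def WFS (S : DRS) : Prop := S.Nonempty ∧ ∀ r ∈ S, WFRule r

/-- `A(S)`: attributes of a system. -/
def AS (S : DRS) : Finset Attr := S.biUnion Ar
/-- `n(S) = |A(S)|`. -/
def nS (S : DRS) : ℕ := (AS S).card
/-- `d(S)`: the maximum length of a rule in `S`. -/
def dS (S : DRS) : ℕ := S.sup ruleLen
/-- `V_S(a)`: values of attribute `a` occurring in `S`. -/
def VS (S : DRS) (a : Attr) : Finset ℕ :=
  S.biUnion fun r => (r.1.filter fun p => p.1 = a).image Prod.snd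
/-- `k(S)`: maximum number of values of a single attribute. -/
def kS (S : DRS) : ℕ := (AS S).sup fun a => (VS S a).card

/-- Branching sets of o-decision trees: `V_S(a)`. -/
def Bo (S : DRS) (a : Attr) : Finset Val := (VS S a).image some
/-- Branching sets of e-decision trees: `EV_S(a) = V_S(a) ∪ {*}`. -/
def Be (S : DRS) (a : Attr) : Finset Val := insert none (Bo S a)

/-- Consistency of an equation system. -/
def Consistent (K : EqSys) : Prop := ∀ p ∈ K, ∀ q ∈ K, p.1 = q.1 → p.2 = q.2

/-- Decision trees: terminal nodes labeled with sets of rules, working nodes labeled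
with an attribute and having a child for each possible value (only children whose
labels lie in the relevant branching set are meaningful). -/
inductive DTree where
  | leaf : DRS → DTree
  | node : Attr → (Val → DTree) → DTree

/-- Depth of a decision tree with respect to branching sets `B`. -/
def depthT (B : Attr → Finset Val) : DTree → ℕ
  | .leaf _ => 0
  | .node a c => ((B a).sup fun v => depthT B (c v)) + 1

/-- A decision tree over a system `S` (with branching sets `B`). -/
def TreeOver (B : Attr → Finset Val) (S : DRS) : DTree → Prop
  | .leaf Z => Z ⊆ S
  | .node a c => a ∈ AS S ∧ ∀ v ∈ B a, TreeOver B S (c v)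

/-- `PathT B Γ K Z`: there is a complete path in `Γ` (following edges with labels
in the branching sets `B`) with equation system `K` and terminal label `Z`. -/
inductive PathT (B : Attr → Finset Val) : DTree → EqSys → DRS → Prop
  | leaf (Z : DRS) : PathT B (.leaf Z) ∅ Z
  | node (a : Attr) (c : Val → DTree) (v : Val) (K : EqSys) (Z : DRS) :
      v ∈ B a → PathT B (c v) K Z → PathT B (.node a c) (insert (a, v) K) Z

/-- `Γ` solves the problem given by correctness condition `cond` on (K(ξ), τ(ξ)). -/
def Solves (cond : EqSys → DRS → Prop) (B : Attr → Finset Val) (Γ : DTree) : Prop :=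
  ∀ K Z, PathT B Γ K Z → Consistent K → cond K Z

/-- Correctness condition for the All Rules problem. -/
def CondAR (S : DRS) (K : EqSys) (Z : DRS) : Prop :=
  (∀ r ∈ Z, Kr r ⊆ K) ∧ ∀ r ∈ S, r ∉ Z → ¬ Consistent (Kr r ∪ K)
/-- Correctness condition for the All Decisions problem. -/
def CondAD (S : DRS) (K : EqSys) (Z : DRS) : Prop :=
  (∀ r ∈ Z, Kr r ⊆ K) ∧ ∀ r ∈ S, r.2 ∉ Z.image Prod.snd → ¬ Consistent (Kr r ∪ K)
/-- Correctness condition for the Some Rules problem. -/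
def CondSR (S : DRS) (K : EqSys) (Z : DRS) : Prop :=
  (∀ r ∈ Z, Kr r ⊆ K) ∧ (Z = ∅ → ∀ r ∈ S, ¬ Consistent (Kr r ∪ K))

/-- Minimum depth of a decision tree over `S` solving the given problem. -/
def hgen (cond : DRS → EqSys → DRS → Prop) (B : DRS → Attr → Finset Val) (S : DRS) : ℕ :=
  sInf {m | ∃ Γ, TreeOver (B S) S Γ ∧ Solves (cond S) (B S) Γ ∧ depthT (B S) Γ = m}

def hAR (S : DRS) : ℕ := hgen CondAR Bo S
def hEAR (S : DRS) : ℕ := hgen CondAR Be S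
def hAD (S : DRS) : ℕ := hgen CondAD Bo S
def hEAD (S : DRS) : ℕ := hgen CondAD Be S
def hSR (S : DRS) : ℕ := hgen CondSR Bo S
def hESR (S : DRS) : ℕ := hgen CondSR Be S

/-- SR-reduced system. -/
def SRred (S : DRS) : Prop := ∀ r ∈ S, ¬ ∃ r' ∈ S, r'.1 ⊂ r.1
/-- AD-reduced system. -/
def ADred (S : DRS) : Prop := ∀ r ∈ S, ¬ ∃ r' ∈ S, r'.1 ⊂ r.1 ∧ r'.2 = r.2
/-- `R_SR(S)`. -/
def RSR (S : DRS) : DRS := S.filter fun r => ¬ ∃ r' ∈ S, r'.1 ⊂ r.1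
/-- `R_AD(S)`. -/
def RAD (S : DRS) : DRS := S.filter fun r => ¬ ∃ r' ∈ S, r'.1 ⊂ r.1 ∧ r'.2 = r.2

/-- `h_C(n,d,k)`: minimum of `h S` over systems with the given parameters. -/
def hmin (h : DRS → ℕ) (n d k : ℕ) : ℕ :=
  sInf {m | ∃ S, WFS S ∧ nS S = n ∧ dS S = d ∧ kS S = k ∧ h S = m}
/-- `H_C(n,d,k)`: maximum of `h S` over systems with the given parameters. -/
def Hmax (h : DRS → ℕ) (n d k : ℕ) : ℕ :=
  sSup {m | ∃ S, WFS S ∧ nS S = n ∧ dS S = d ∧ kS S = k ∧ h S = m}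
/-- `h_C^R(n,d,k)`: minimum of `h S` over reduced systems (`P`) with given parameters. -/
def hminR (h : DRS → ℕ) (P : DRS → Prop) (n d k : ℕ) : ℕ :=
  sInf {m | ∃ S, WFS S ∧ P S ∧ nS S = n ∧ dS S = d ∧ kS S = k ∧ h S = m}
/-- `H_C^R(n,d,k)`: maximum of `h S` over reduced systems (`P`) with given parameters. -/
def HmaxR (h : DRS → ℕ) (P : DRS → Prop) (n d k : ℕ) : ℕ :=
  sSup {m | ∃ S, WFS S ∧ P S ∧ nS S = n ∧ dS S = d ∧ kS S = k ∧ h S = m}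

/-- Node cover of the hypergraph `G(S)`. -/
def NodeCover (S : DRS) (B : Finset Attr) : Prop :=
  B ⊆ AS S ∧ ∀ r ∈ S, Ar r ≠ ∅ → (Ar r ∩ B).Nonempty
/-- `β(S)`: minimum cardinality of a node cover of `G(S)`. -/
def nodeCoverNum (S : DRS) : ℕ := sInf {m | ∃ B, NodeCover S B ∧ B.card = m}

/-- `I_SR(S)`. -/
def ISR (S : DRS) : DRS := if ∀ r ∈ S, r.1 ≠ ∅ then S else S.filter fun r => r.1 = ∅
/-- `D_0(S)`: right-hand sides of length-0 rules. -/
def D0 (S : DRS) : Finset ℕ := (S.filter fun r => r.1 = ∅).image Prod.snd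
/-- `I_AD(S)`. -/
def IAD (S : DRS) : DRS := S.filter fun r => r.1 = ∅ ∨ r.2 ∉ D0 S

/-- `K(S, δ̄)` for an assignment `f` of numeric values to all attributes of `S`. -/
def KStuple (S : DRS) (f : Attr → ℕ) : EqSys := (AS S).image fun a => (a, some (f a))
/-- An incomplete decision rule system. -/
def IncompleteS (S : DRS) : Prop :=
  ∃ f : Attr → ℕ, (∀ a ∈ AS S, f a ∈ VS S a) ∧ ∀ r ∈ S, ¬ Consistent (Kr r ∪ KStuple S f)

/-- `r_α`: remove from the left-hand side of `r` all equations belonging to `α`. -/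
def resRule (α : EqSys) (r : Rule) : Rule :=
  (r.1.filter fun p => (p.1, (some p.2 : Val)) ∉ α, r.2)
/-- `S_α`: rules `r_α` for the rules `r ∈ S` with `K(r) ∪ α` consistent. -/
def Sres (α : EqSys) (S : DRS) : DRS :=
  (S.filter fun r => Consistent (Kr r ∪ α)).image (resRule α)

/-- Value chosen at a node labeled by an attribute `a ∉ A(S_α)` when building `Γ_α`:
the `α`-value of `a` if `a` occurs in `α`, and the minimum number of `V_S(a)` otherwise. -/
def chooseVal (α : EqSys) (S : DRS) (a : Attr) : Val :=
  if h : ∃ v, (a, v) ∈ α then Classical.choose h else some (sInf {n : ℕ | n ∈ VS S a})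

/-- The decision tree `Γ_α`. -/
def resTree (α : EqSys) (S : DRS) : DTree → DTree
  | .leaf Z => .leaf (Sres α Z)
  | .node a c =>
      if a ∈ AS (Sres α S) then .node a fun v => resTree α S (c v)
      else resTree α S (c (chooseVal α S a))

/-- The o-decision tree `o(Γ)`: remove all nodes reachable only via an edge labeled `*`. -/
def oTree : DTree → DTree
  | .leaf Z => .leaf Z
  | .node a c => .node a fun v => match v with
      | none => .leaf ∅
      | some x => oTree (c (some x))
namespace Stmt6Aux

open Finset

lemma mem_AS_iff {S : DRS} {a : Attr} : a ∈ AS S ↔ ∃ r ∈ S, a ∈ Ar r := by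
  simp [AS]

lemma mem_Ar_iff {r : Rule} {a : Attr} : a ∈ Ar r ↔ ∃ p ∈ r.1, p.1 = a := by
  simp [Ar]

lemma VS_nonempty {S : DRS} {a : Attr} (h : a ∈ AS S) : (VS S a).Nonempty := by
  obtain ⟨r, hr, ha⟩ := mem_AS_iff.1 h
  obtain ⟨p, hp, hpa⟩ := mem_Ar_iff.1 ha
  exact ⟨p.2, Finset.mem_biUnion.2 ⟨r, hr,
    Finset.mem_image.2 ⟨p, Finset.mem_filter.2 ⟨hp, hpa⟩, rfl⟩⟩⟩

/-- A default pick in `Bo`. -/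
noncomputable def pickMin (S : DRS) (a : Attr) : Val :=
  if h : (VS S a).Nonempty then some ((VS S a).min' h) else none

lemma pickMin_mem {S : DRS} {a : Attr} (h : a ∈ AS S) : pickMin S a ∈ Bo S a := by
  have hne := VS_nonempty h
  rw [pickMin, dif_pos hne]
  exact Finset.mem_image.2 ⟨_, (VS S a).min'_mem hne, rfl⟩

lemma consistent_of_pick (pick : Attr → Val) {K : EqSys}
    (h : ∀ p ∈ K, p.2 = pick p.1) : Consistent K := by
  intro p hp q hq he
  rw [h p hp, h q hq, he]

lemma consistent_Kr {r : Rule} (h : WFRule r) : Consistent (Kr r) := by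
  intro p hp q hq he
  simp [Kr] at hp hq
  obtain ⟨a, b, hab, rfl, rfl⟩ := hp
  obtain ⟨a', b', hab', rfl, rfl⟩ := hq
  simp at he ⊢
  exact h _ hab _ hab' he

lemma exists_conflict {K1 K2 : EqSys} (h1 : Consistent K1) (h2 : Consistent K2)
    (h : ¬ Consistent (K1 ∪ K2)) :
    ∃ p ∈ K1, ∃ q ∈ K2, p.1 = q.1 ∧ p.2 ≠ q.2 := by
  unfold Consistent at h
  push_neg at h
  obtain ⟨p, hp, q, hq, he, hne⟩ := h
  rw [Finset.mem_union] at hp hq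
  rcases hp with hp | hp <;> rcases hq with hq | hq
  · exact absurd (h1 p hp q hq he) hne
  · exact ⟨p, hp, q, hq, he, hne⟩
  · exact ⟨q, hq, p, hp, he.symm, fun hh => hne hh.symm⟩
  · exact absurd (h2 p hp q hq he) hne

lemma attr_mem_of_mem_Kr {r : Rule} {p : Attr × Val} (hp : p ∈ Kr r) : p.1 ∈ Ar r := by
  simp [Kr] at hp
  obtain ⟨a, b, hab, rfl, rfl⟩ := hp
  exact mem_Ar_iff.2 ⟨(a, b), hab, rfl⟩

lemma exists_path (S : DRS) (B : Attr → Finset Val) (pick : Attr → Val)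
    (hpick : ∀ a ∈ AS S, pick a ∈ B a) :
    ∀ Γ, TreeOver B S Γ → ∃ K Z, PathT B Γ K Z ∧ Z ⊆ S ∧
      (∀ p ∈ K, p.2 = pick p.1 ∧ p.1 ∈ AS S) ∧ (K.image Prod.fst).card ≤ depthT B Γ := by
  intro Γ
  induction Γ with
  | leaf Z =>
    intro h
    exact ⟨∅, Z, PathT.leaf Z, h, by simp, by simp [depthT]⟩
  | node a c ih =>
    intro h
    obtain ⟨ha, hc⟩ := h
    obtain ⟨K, Z, hp, hZ, hK, hcard⟩ := ih (pick a) (hc _ (hpick a ha))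
    refine ⟨insert (a, pick a) K, Z, PathT.node a c (pick a) K Z (hpick a ha) hp, hZ, ?_, ?_⟩
    · intro p hp'
      rcases Finset.mem_insert.1 hp' with h' | h'
      · subst h'; exact ⟨rfl, ha⟩
      · exact hK p h'
    · rw [Finset.image_insert]
      calc (insert a (K.image Prod.fst)).card ≤ (K.image Prod.fst).card + 1 :=
            Finset.card_insert_le _ _
        _ ≤ depthT B (c (pick a)) + 1 := by omega
        _ ≤ ((B a).sup fun v => depthT B (c v)) + 1 := by
            exact Nat.add_le_add_right
              (Finset.le_sup (f := fun v => depthT B (c v)) (hpick a ha)) 1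
        _ = depthT B (.node a c) := rfl

/-- The universal tree querying the attributes in `L`. -/
def fullTree (S : DRS) : EqSys → List Attr → DTree
  | K0, [] => .leaf (S.filter fun r => Kr r ⊆ K0)
  | K0, a :: L => .node a fun v => fullTree S (insert (a, v) K0) L

lemma fullTree_over (S : DRS) (B : Attr → Finset Val) :
    ∀ L K0, (∀ a ∈ L, a ∈ AS S) → TreeOver B S (fullTree S K0 L) := by
  intro L
  induction L with
  | nil => intro K0 _; exact Finset.filter_subset _ _
  | cons a L ih =>
    intro K0 h
    exact ⟨h a List.mem_cons_self, fun v _ => ih _ fun a' ha' => h a' (List.mem_cons_of_mem _ ha')⟩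

lemma fullTree_path (S : DRS) (B : Attr → Finset Val) :
    ∀ L K0 K Z, PathT B (fullTree S K0 L) K Z →
      Z = (S.filter fun r => Kr r ⊆ K ∪ K0) ∧ ∀ a ∈ L, ∃ v, (a, v) ∈ K := by
  intro L
  induction L with
  | nil =>
    intro K0 K Z hp
    cases hp with
    | leaf => simp
  | cons a L ih =>
    intro K0 K Z hp
    cases hp with
    | node _ _ v K1 _ hv hp1 =>
      obtain ⟨hZ, hL⟩ := ih (insert (a, v) K0) K1 Z hp1
      have hU : K1 ∪ insert (a, v) K0 = insert (a, v) K1 ∪ K0 := by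
        rw [Finset.union_insert, Finset.insert_union]
      constructor
      · rw [hZ, hU]
      · intro a' ha'
        rcases List.mem_cons.1 ha' with rfl | h'
        · exact ⟨v, Finset.mem_insert_self _ _⟩
        · obtain ⟨v', hv'⟩ := hL a' h'
          exact ⟨v', Finset.mem_insert_of_mem hv'⟩

lemma exists_solver (S : DRS) (B : Attr → Finset Val) :
    ∃ Γ, TreeOver B S Γ ∧ Solves (CondAR S) B Γ := by
  refine ⟨fullTree S ∅ (AS S).toList, fullTree_over S B _ ∅ (fun a ha => by simpa using ha), ?_⟩
  intro K Z hp _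
  obtain ⟨hZ, hL⟩ := fullTree_path S B _ ∅ K Z hp
  rw [Finset.union_empty] at hZ
  subst hZ
  constructor
  · intro r hr
    exact (Finset.mem_filter.1 hr).2
  · intro r hr hrZ hcons
    have hns : ¬ Kr r ⊆ K := fun hsub => hrZ (Finset.mem_filter.2 ⟨hr, hsub⟩)
    obtain ⟨p, hpK, hpn⟩ := Finset.not_subset.1 hns
    have ha : p.1 ∈ AS S := mem_AS_iff.2 ⟨r, hr, attr_mem_of_mem_Kr hpK⟩
    obtain ⟨v, hv⟩ := hL p.1 (by simpa using ha)
    have := hcons p (Finset.mem_union_left _ hpK) (p.1, v) (Finset.mem_union_right _ hv) rfl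
    simp at this
    subst this
    exact hpn hv

lemma solves_mono {c1 c2 : EqSys → DRS → Prop} {B : Attr → Finset Val} {Γ : DTree}
    (h : Solves c1 B Γ) (hm : ∀ K Z, c1 K Z → c2 K Z) : Solves c2 B Γ :=
  fun K Z hp hc => hm K Z (h K Z hp hc)

/-- Master lemma: node-cover lower bound. -/
lemma cover_le_h (T S : DRS) (cond : EqSys → DRS → Prop) (B : Attr → Finset Val)
    (pick : Attr → Val) (hpick : ∀ a ∈ AS S, pick a ∈ B a)
    (hm : ∀ K Z, CondAR S K Z → cond K Z)
    (key : ∀ K Z, Z ⊆ S → (∀ p ∈ K, p.2 = pick p.1 ∧ p.1 ∈ AS S) → cond K Z →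
      ∀ r ∈ T, Ar r ≠ ∅ → ∃ a, a ∈ Ar r ∧ ∃ v, (a, v) ∈ K) :
    nodeCoverNum T ≤
      sInf {m | ∃ Γ, TreeOver B S Γ ∧ Solves cond B Γ ∧ depthT B Γ = m} := by
  have hne : {m | ∃ Γ, TreeOver B S Γ ∧ Solves cond B Γ ∧ depthT B Γ = m}.Nonempty := by
    obtain ⟨Γ, h1, h2⟩ := exists_solver S B
    exact ⟨depthT B Γ, Γ, h1, solves_mono h2 hm, rfl⟩
  obtain ⟨Γ, hover, hsolves, hdepth⟩ := Nat.sInf_mem hne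
  obtain ⟨K, Z, hp, hZ, hK, hcard⟩ := exists_path S B pick hpick Γ hover
  have hcons : Consistent K := consistent_of_pick pick fun p hp => (hK p hp).1
  have hcond : cond K Z := hsolves K Z hp hcons
  set Bcov := (K.image Prod.fst) ∩ AS T with hBcov
  have hcover : NodeCover T Bcov := by
    refine ⟨Finset.inter_subset_right, ?_⟩
    intro r hr hAr
    obtain ⟨a, haAr, v, hvK⟩ := key K Z hZ hK hcond r hr hAr
    refine ⟨a, Finset.mem_inter.2 ⟨haAr, Finset.mem_inter.2 ⟨?_, ?_⟩⟩⟩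
    · exact Finset.mem_image.2 ⟨(a, v), hvK, rfl⟩
    · exact mem_AS_iff.2 ⟨r, hr, haAr⟩
  calc nodeCoverNum T ≤ Bcov.card := Nat.sInf_le ⟨Bcov, hcover, rfl⟩
    _ ≤ (K.image Prod.fst).card := Finset.card_le_card Finset.inter_subset_left
    _ ≤ depthT B Γ := hcard
    _ = _ := hdepth

lemma Ar_ne_nonempty {r : Rule} (h : Ar r ≠ ∅) : r.1.Nonempty := by
  rcases Finset.eq_empty_or_nonempty r.1 with h' | h'
  · exact absurd (by simp [Ar, h']) h
  · exact h'

end Stmt6Aux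
/-- lower bounds via the node cover number `β`. -/
theorem stmt6 (S : DRS) (hS : WFS S) :
    (nodeCoverNum S ≤ hAR S ∧ nodeCoverNum S ≤ hEAR S) ∧
    (nodeCoverNum (ISR S) ≤ hESR S ∧ nodeCoverNum (IAD S) ≤ hEAD S) ∧
    (IncompleteS S → nodeCoverNum S ≤ hSR S ∧ nodeCoverNum S ≤ hAD S) := by
  obtain ⟨hSne, hWF⟩ := hS
  -- extraction of a shared attribute from an inconsistent union
  have extract : ∀ (pick : Attr → Val) (K : EqSys) (r : Rule), r ∈ S →
      (∀ p ∈ K, p.2 = pick p.1 ∧ p.1 ∈ AS S) → ¬ Consistent (Kr r ∪ K) →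
      ∃ a, a ∈ Ar r ∧ ∃ v, (a, v) ∈ K := by
    intro pick K r hr hK hcons
    obtain ⟨p, hp1, q, hq, heq, hne⟩ := Stmt6Aux.exists_conflict
      (Stmt6Aux.consistent_Kr (hWF r hr))
      (Stmt6Aux.consistent_of_pick pick fun p hp => (hK p hp).1) hcons
    exact ⟨p.1, Stmt6Aux.attr_mem_of_mem_Kr hp1, q.2, by rw [heq]; exact hq⟩
  -- key property for the AR problems
  have key_AR : ∀ (pick : Attr → Val) (K : EqSys) (Z : DRS), Z ⊆ S →
      (∀ p ∈ K, p.2 = pick p.1 ∧ p.1 ∈ AS S) → CondAR S K Z →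
      ∀ r ∈ S, Ar r ≠ ∅ → ∃ a, a ∈ Ar r ∧ ∃ v, (a, v) ∈ K := by
    intro pick K Z hZ hK hc r hr hAr
    obtain ⟨h1, h2⟩ := hc
    by_cases hrZ : r ∈ Z
    · obtain ⟨p, hp⟩ := Stmt6Aux.Ar_ne_nonempty hAr
      refine ⟨p.1, Stmt6Aux.mem_Ar_iff.2 ⟨p, hp, rfl⟩, some p.2, ?_⟩
      exact h1 r hrZ (Finset.mem_image.2 ⟨p, hp, rfl⟩)
    · exact extract pick K r hr hK (h2 r hr hrZ)
  -- all-none pick: rules in Z have empty left-hand side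
  have hZempty : ∀ (K : EqSys) (Z : DRS), (∀ p ∈ K, p.2 = (fun _ => (none : Val)) p.1 ∧ p.1 ∈ AS S) →
      (∀ r ∈ Z, Kr r ⊆ K) → ∀ r' ∈ Z, r'.1 = ∅ := by
    intro K Z hK h1 r' hr'Z
    by_contra hne
    obtain ⟨p, hp⟩ := Finset.nonempty_iff_ne_empty.2 hne
    have hmem : (p.1, (some p.2 : Val)) ∈ K := h1 r' hr'Z (Finset.mem_image.2 ⟨p, hp, rfl⟩)
    simpa using (hK _ hmem).1
  refine ⟨⟨?_, ?_⟩, ⟨?_, ?_⟩, fun hinc => ?_⟩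
  · -- hAR
    exact Stmt6Aux.cover_le_h S S (CondAR S) (Bo S) (Stmt6Aux.pickMin S)
      (fun a ha => Stmt6Aux.pickMin_mem ha) (fun _ _ h => h) (key_AR _)
  · -- hEAR
    exact Stmt6Aux.cover_le_h S S (CondAR S) (Be S) (Stmt6Aux.pickMin S)
      (fun a ha => Finset.mem_insert_of_mem (Stmt6Aux.pickMin_mem ha)) (fun _ _ h => h) (key_AR _)
  · -- hESR
    refine Stmt6Aux.cover_le_h (ISR S) S (CondSR S) (Be S) (fun _ => none)
      (fun a _ => Finset.mem_insert_self _ _)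
      (fun K Z h => ⟨h.1, fun hZe r hr => h.2 r hr (by simp [hZe])⟩) ?_
    intro K Z hZ hK hc r hr hAr
    obtain ⟨h1, h2⟩ := hc
    by_cases hall : ∀ r ∈ S, r.1 ≠ ∅
    · rw [ISR, if_pos hall] at hr
      have hZe : Z = ∅ := by
        rw [Finset.eq_empty_iff_forall_notMem]
        intro r' hr'Z
        exact hall r' (hZ hr'Z) (hZempty K Z hK h1 r' hr'Z)
      exact extract (fun _ => none) K r hr hK (h2 hZe r hr)
    · rw [ISR, if_neg hall] at hr
      exact absurd (by simp [Ar, (Finset.mem_filter.1 hr).2]) hAr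
  · -- hEAD
    refine Stmt6Aux.cover_le_h (IAD S) S (CondAD S) (Be S) (fun _ => none)
      (fun a _ => Finset.mem_insert_self _ _)
      (fun K Z h => ⟨h.1, fun r hr hd =>
        h.2 r hr (fun hrZ => hd (Finset.mem_image.2 ⟨r, hrZ, rfl⟩))⟩) ?_
    intro K Z hZ hK hc r hr hAr
    obtain ⟨h1, h2⟩ := hc
    obtain ⟨hrS, hor⟩ := Finset.mem_filter.1 hr
    have hr1 : r.1 ≠ ∅ := fun h => hAr (by simp [Ar, h])
    have hD0 : r.2 ∉ D0 S := hor.resolve_left hr1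
    have hnotin : r.2 ∉ Z.image Prod.snd := by
      intro hmem
      obtain ⟨r', hr'Z, hr'2⟩ := Finset.mem_image.1 hmem
      exact hD0 (Finset.mem_image.2 ⟨r', Finset.mem_filter.2 ⟨hZ hr'Z,
        hZempty K Z hK h1 r' hr'Z⟩, hr'2⟩)
    exact extract (fun _ => none) K r hrS hK (h2 r hrS hnotin)
  · -- hSR and hAD (incomplete case)
    obtain ⟨f, hf1, hf2⟩ := hinc
    have hpick : ∀ a ∈ AS S, (fun a => (some (f a) : Val)) a ∈ Bo S a :=
      fun a ha => Finset.mem_image.2 ⟨f a, hf1 a ha, rfl⟩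
    have hKsub : ∀ (K : EqSys), (∀ p ∈ K, p.2 = (fun a => (some (f a) : Val)) p.1 ∧ p.1 ∈ AS S) →
        K ⊆ KStuple S f := by
      intro K hK p hp
      obtain ⟨h21, h22⟩ := hK p hp
      have hpe : p = (p.1, some (f p.1)) := Prod.ext rfl h21
      rw [hpe]
      exact Finset.mem_image.2 ⟨p.1, h22, rfl⟩
    have hconsT : Consistent (KStuple S f) := by
      intro p hp q hq he
      obtain ⟨a, _, rfl⟩ := Finset.mem_image.1 hp
      obtain ⟨b, _, rfl⟩ := Finset.mem_image.1 hq
      simp at he ⊢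
      rw [he]
    have hZe : ∀ (K : EqSys) (Z : DRS), Z ⊆ S →
        (∀ p ∈ K, p.2 = (fun a => (some (f a) : Val)) p.1 ∧ p.1 ∈ AS S) →
        (∀ r ∈ Z, Kr r ⊆ K) → Z = ∅ := by
      intro K Z hZ hK h1
      rw [Finset.eq_empty_iff_forall_notMem]
      intro r' hr'Z
      have hsub : Kr r' ⊆ KStuple S f := (h1 r' hr'Z).trans (hKsub K hK)
      have : Kr r' ∪ KStuple S f = KStuple S f := Finset.union_eq_right.2 hsub
      exact hf2 r' (hZ hr'Z) (by rw [this]; exact hconsT)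
    constructor
    · -- hSR
      refine Stmt6Aux.cover_le_h S S (CondSR S) (Bo S) (fun a => some (f a)) hpick
        (fun K Z h => ⟨h.1, fun hZe' r hr => h.2 r hr (by simp [hZe'])⟩) ?_
      intro K Z hZ hK hc r hr _
      obtain ⟨h1, h2⟩ := hc
      exact extract (fun a => some (f a)) K r hr hK (h2 (hZe K Z hZ hK h1) r hr)
    · -- hAD
      refine Stmt6Aux.cover_le_h S S (CondAD S) (Bo S) (fun a => some (f a)) hpick
        (fun K Z h => ⟨h.1, fun r hr hd =>
          h.2 r hr (fun hrZ => hd (Finset.mem_image.2 ⟨r, hrZ, rfl⟩))⟩) ?_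
      intro K Z hZ hK hc r hr _
      obtain ⟨h1, h2⟩ := hc
      have hZ0 := hZe K Z hZ hK h1
      exact extract (fun a => some (f a)) K r hr hK (h2 r hr (by simp [hZ0]))
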